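/- χ²-statistic sensitivity bound: for a 2×2 contingency table from a GWAS dataset with n participants (n even, balanced case/control design), the χ² statistic, viewed as a function of the table with one individual's entry changed, has global sensitivity at most 4n/(n+2). -/
import Mathlib


/-- χ² statistic of the 2×2 genotype-by-status contingency table in a balanced design with
`n` participants: rows (cases/controls) each have `n/2` individuals; `a` and `c` are the
counts in the first column for cases and controls respectively. -/
noncomputable def chisq (n a c : ℝ) : ℝ :=
  n * (a * (n / 2 - c) - (n / 2 - a) * c) ^ 2 /
    ((n / 2) * (n / 2) * (a + c) * (n - a - c))

lemma chisq_simp (M A C : ℝ) (hM : M ≠ 0) :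
    chisq (2*M) A C = 2*M*(A-C)^2 / ((A+C)*(2*M-A-C)) := by
  unfold chisq
  have h1 : (2*M) * (A * ((2*M) / 2 - C) - ((2*M) / 2 - A) * C) ^ 2
      = M^2 * (2*M*(A-C)^2) := by ring
  have h2 : ((2*M) / 2) * ((2*M) / 2) * (A + C) * (2*M - A - C)
      = M^2 * ((A+C)*(2*M-A-C)) := by ring
  rw [h1, h2, mul_div_mul_left _ _ (pow_ne_zero 2 hM)]

lemma key_up (M A C : ℝ) (hM : 1 ≤ M) (hA0 : 0 ≤ A) (hC0 : 0 ≤ C)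
    (hA : A + 1 ≤ M) (hC : C ≤ M) (hs1 : 1 ≤ A + C) :
    (M+1) * ((A-C+1)^2*((A+C)*(2*M-A-C)) - (A-C)^2*((A+C+1)*(2*M-A-C-1)))
      ≤ 2*((A+C+1)*(2*M-A-C-1)*((A+C)*(2*M-A-C))) := by
  nlinarith [mul_nonneg hA0 hC0, mul_nonneg (sub_nonneg.2 hC) hA0,
    mul_nonneg (sub_nonneg.2 hC) hC0, sq_nonneg (A-C), sq_nonneg (A+C-1),
    mul_nonneg (mul_nonneg hA0 hC0) (sub_nonneg.2 hC),
    mul_nonneg hC0 (sub_nonneg.2 (by linarith : A + 1 ≤ M)),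
    mul_nonneg (sub_nonneg.2 (by linarith : A + 1 ≤ M)) (sub_nonneg.2 hC),
    mul_nonneg (mul_nonneg hC0 hC0) (sub_nonneg.2 (by linarith : A + 1 ≤ M)),
    sq_nonneg (M - 1 - A), sq_nonneg C, mul_nonneg hC0 hC0]

lemma key_lo (M A C : ℝ) (hM : 1 ≤ M) (hA0 : 0 ≤ A) (hC0 : 0 ≤ C)
    (hA : A + 1 ≤ M) (hC : C ≤ M) (hs1 : 1 ≤ A + C) :
    -(2*((A+C+1)*(2*M-A-C-1)*((A+C)*(2*M-A-C))))
      ≤ (M+1) * ((A-C+1)^2*((A+C)*(2*M-A-C)) - (A-C)^2*((A+C+1)*(2*M-A-C-1))) := by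
  have hMC : (0:ℝ) ≤ M - C := by linarith
  have hMA : (0:ℝ) ≤ M - 1 - A := by linarith
  nlinarith [mul_nonneg hA0 hC0, mul_nonneg hA0 hMC, mul_nonneg hA0 hMA,
    mul_nonneg hMC hMA, mul_nonneg hMC hC0, mul_nonneg hMC hMC,
    mul_nonneg hA0 hA0, mul_nonneg (mul_nonneg hA0 hC0) hMC,
    mul_nonneg (mul_nonneg hA0 hMC) hMA, mul_nonneg (mul_nonneg hMC hMC) hA0,
    mul_nonneg (mul_nonneg hA0 hA0) hMC, mul_nonneg (mul_nonneg hA0 hA0) hC0,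
    mul_nonneg (mul_nonneg hMC hMC) hC0, sq_nonneg (A - C), sq_nonneg (A + C - 1),
    mul_nonneg (mul_nonneg hA0 hC0) hMA, sq_nonneg (A - C + 1)]

lemma edge_bound (M : ℝ) (hM : 1 ≤ M) : |2*M/(2*M-1)| ≤ 4*(2*M)/(2*M+2) := by
  rw [abs_of_nonneg (div_nonneg (by linarith) (by linarith))]
  rw [div_le_div_iff₀ (by linarith) (by linarith)]
  nlinarith

/-- χ²-statistic sensitivity bound (Uhler et al. 2013): in a balanced GWAS with `n`
participants, changing one individual's genotype (moving one count within its row) changes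
the χ² statistic by at most `4n/(n+2)`. -/
theorem chisq_sensitivity (n : ℕ) (hpos : 0 < n) (heven : Even n) (a c : ℕ)
    (ha : a + 1 ≤ n / 2) (hc : c ≤ n / 2) :
    |chisq n (a + 1) c - chisq n a c| ≤ 4 * n / (n + 2) := by
  obtain ⟨m, hm⟩ := heven
  subst hm
  have hm2 : (m + m) / 2 = m := by omega
  rw [hm2] at ha hc
  have hm1 : 1 ≤ m := by omega
  set M : ℝ := (m : ℝ) with hMdef
  have hM1 : (1:ℝ) ≤ M := by rw [hMdef]; exact_mod_cast hm1
  have hM0 : M ≠ 0 := by linarith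
  have hn : ((m + m : ℕ) : ℝ) = 2 * M := by push_cast; ring
  rw [hn]
  set A : ℝ := (a : ℝ) with hAdef
  set C : ℝ := (c : ℝ) with hCdef
  have hA0 : (0:ℝ) ≤ A := Nat.cast_nonneg a
  have hC0 : (0:ℝ) ≤ C := Nat.cast_nonneg c
  have hA : A + 1 ≤ M := by rw [hAdef, hMdef]; exact_mod_cast ha
  have hC : C ≤ M := by rw [hCdef, hMdef]; exact_mod_cast hc
  rw [chisq_simp M _ _ hM0, chisq_simp M _ _ hM0]
  by_cases h00 : a = 0 ∧ c = 0
  · obtain ⟨rfl, rfl⟩ := h00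
    have e0 : A = 0 := by simp [hAdef]
    have e0' : C = 0 := by simp [hCdef]
    rw [e0, e0']
    have e1 : 2*M*(0+1-0)^2 / ((0+1+0)*(2*M-(0+1)-0)) = 2*M/(2*M-1) := by
      norm_num
    have e2 : 2*M*((0:ℝ)-0)^2 / ((0+0)*(2*M-0-0)) = 0 := by norm_num
    rw [e1, e2, sub_zero]
    exact edge_bound M hM1
  · by_cases hend : a + 1 = m ∧ c = m
    · obtain ⟨h1, h2⟩ := hend
      have eA : A + 1 = M := by rw [hAdef, hMdef]; exact_mod_cast h1
      have eC : C = M := by rw [hCdef, hMdef]; exact_mod_cast h2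
      have e1 : 2*M*(A+1-C)^2 / ((A+1+C)*(2*M-(A+1)-C)) = 0 := by
        rw [eA, eC]; norm_num
      have e2 : 2*M*(A-C)^2 / ((A+C)*(2*M-A-C)) = 2*M/(2*M-1) := by
        have hA' : A = M - 1 := by linarith
        rw [hA', eC]
        have hd : ((M-1)+M)*(2*M-(M-1)-M) = 2*M-1 := by ring
        have hnum : 2*M*((M-1)-M)^2 = 2*M := by ring
        rw [hd, hnum]
      rw [e1, e2, zero_sub, abs_neg]
      exact edge_bound M hM1
    · -- main case
      have hs1n : 1 ≤ a + c := by omega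
      have hs2n : a + 1 + c + 1 ≤ m + m := by omega
      have hs1 : (1:ℝ) ≤ A + C := by rw [hAdef, hCdef]; exact_mod_cast hs1n
      have hs2 : A + 1 + C + 1 ≤ 2 * M := by
        have := (Nat.cast_le (α := ℝ)).2 hs2n
        push_cast at this; linarith
      have hd1 : (0:ℝ) < A + 1 + C := by linarith
      have hd2 : (0:ℝ) < 2*M - (A+1) - C := by linarith
      have hd3 : (0:ℝ) < A + C := by linarith
      have hd4 : (0:ℝ) < 2*M - A - C := by linarith
      have hD1 : (0:ℝ) < (A+1+C)*(2*M-(A+1)-C) := mul_pos hd1 hd2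
      have hD2 : (0:ℝ) < (A+C)*(2*M-A-C) := mul_pos hd3 hd4
      rw [abs_sub_le_iff]
      constructor
      · rw [div_sub_div _ _ (ne_of_gt hD1) (ne_of_gt hD2),
          div_le_div_iff₀ (mul_pos hD1 hD2) (by linarith : (0:ℝ) < 2*M+2)]
        have h := key_up M A C hM1 hA0 hC0 hA hC hs1
        nlinarith [mul_le_mul_of_nonneg_left h (by linarith : (0:ℝ) ≤ 4*M)]
      · rw [div_sub_div _ _ (ne_of_gt hD2) (ne_of_gt hD1),
          div_le_div_iff₀ (mul_pos hD2 hD1) (by linarith : (0:ℝ) < 2*M+2)]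
        have h := key_lo M A C hM1 hA0 hC0 hA hC hs1
        nlinarith [mul_le_mul_of_nonneg_left h (by linarith : (0:ℝ) ≤ 4*M)]
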